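/- Define s_{0,2k}(x) := (−1)^k ∫₀¹ sin(x·u)·T_{2k}(u)/√(1−u²) du. Then for every natural number n and every real x, Σ_{k=0}^{n} (−1)^k s_{0,2k}(x) = (π/4)·H₀(x) + (1/2)·∫₀¹ sin(x·t)·U_{2n}(t)/√(1−t²) dt, where H₀ is the Struve function of order zero and U_{2n} the Chebyshev polynomial of the second kind. -/

import Mathlib

open Polynomial

/-- Struve function of order zero. -/
noncomputable def struveH0 (z : ℝ) : ℝ :=
  ∑' k : ℕ, (-1 : ℝ) ^ k * (z / 2) ^ (2 * k + 1) / (Real.Gamma ((k : ℝ) + 3 / 2)) ^ 2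

/-- `s_{0,2k}(x)` as the integral `(-1)^k ∫₀¹ sin(xu) T_{2k}(u)/√(1-u²) du`. -/
noncomputable def s0 (k : ℕ) (x : ℝ) : ℝ :=
  (-1 : ℝ) ^ k * ∫ u in (0:ℝ)..1,
    Real.sin (x * u) * (Polynomial.Chebyshev.T ℝ (2 * k)).eval u / Real.sqrt (1 - u ^ 2)

open MeasureTheory Real Set

lemma Up2 (m : ℤ) : Chebyshev.U ℝ (m + 2) = Chebyshev.U ℝ m + 2 * Chebyshev.T ℝ (m + 2) := by
  have h2 := Chebyshev.T_eq_U_sub_X_mul_U ℝ (m + 2)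
  have h4 := Chebyshev.U_add_two ℝ m
  rw [show (m + 2 - 1 : ℤ) = m + 1 by ring] at h2
  linear_combination -2 * h2 - h4

lemma cheb_sum (n : ℕ) (t : ℝ) :
    ∑ k ∈ Finset.range (n + 1), (Chebyshev.T ℝ (2 * k)).eval t
      = (1 + (Chebyshev.U ℝ (2 * n)).eval t) / 2 := by
  induction n with
  | zero => simp [Chebyshev.T_zero, Chebyshev.U_zero]
  | succ n ih =>
    rw [Finset.sum_range_succ, ih]
    have h : (2 * ((n : ℤ) + 1)) = 2 * (n : ℤ) + 2 := by ring
    push_cast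
    rw [h, Up2]
    simp [Polynomial.eval_add, Polynomial.eval_mul]
    ring

lemma subst_cos (g : ℝ → ℝ) :
    (∫ u in (0:ℝ)..1, g u / Real.sqrt (1 - u ^ 2))
      = ∫ θ in (0:ℝ)..(Real.pi / 2), g (Real.cos θ) := by
  have hpi : (0:ℝ) < Real.pi / 2 := by positivity
  rw [intervalIntegral.integral_of_le (by norm_num : (0:ℝ) ≤ 1),
    intervalIntegral.integral_of_le hpi.le,
    MeasureTheory.integral_Ioc_eq_integral_Ioo,
    MeasureTheory.integral_Ioc_eq_integral_Ioo]
  have himg : Real.cos '' Set.Ioo 0 (Real.pi / 2) = Set.Ioo 0 1 := by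
    ext y
    constructor
    · rintro ⟨θ, hθ, rfl⟩
      refine ⟨Real.cos_pos_of_mem_Ioo ⟨by linarith [hθ.1], hθ.2⟩, ?_⟩
      have h1 : Real.cos θ < Real.cos 0 :=
        Real.strictAntiOn_cos ⟨le_refl 0, Real.pi_pos.le⟩
          ⟨hθ.1.le, by linarith [Real.pi_pos, hθ.2]⟩ hθ.1
      simpa using h1
    · intro hy
      refine ⟨Real.arccos y, ⟨?_, ?_⟩, Real.cos_arccos (by linarith [hy.1]) hy.2.le⟩
      · exact Real.arccos_pos.2 hy.2
      · exact Real.arccos_lt_pi_div_two.2 hy.1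
  have hinj : Set.InjOn Real.cos (Set.Ioo 0 (Real.pi / 2)) := by
    apply Real.strictAntiOn_cos.injOn.mono
    intro θ hθ
    exact ⟨hθ.1.le, by linarith [hθ.2, Real.pi_pos]⟩
  have hderiv : ∀ θ ∈ Set.Ioo (0:ℝ) (Real.pi / 2),
      HasDerivWithinAt Real.cos (-Real.sin θ) (Set.Ioo 0 (Real.pi / 2)) θ :=
    fun θ _ => (Real.hasDerivAt_cos θ).hasDerivWithinAt
  rw [← himg,
    MeasureTheory.integral_image_eq_integral_abs_deriv_smul measurableSet_Ioo hderiv hinj]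
  apply MeasureTheory.setIntegral_congr_fun measurableSet_Ioo
  intro θ hθ
  have hs : 0 < Real.sin θ := Real.sin_pos_of_pos_of_lt_pi hθ.1
    (by linarith [hθ.2, Real.pi_pos])
  have hsq : Real.sqrt (1 - Real.cos θ ^ 2) = Real.sin θ := by
    rw [show 1 - Real.cos θ ^ 2 = Real.sin θ ^ 2 by
      have := Real.sin_sq_add_cos_sq θ; linarith]
    exact Real.sqrt_sq hs.le
  simp only [smul_eq_mul, abs_neg, abs_of_pos hs, hsq]
  field_simp

lemma fact_cast_succ (m : ℕ) : ((m + 1).factorial : ℝ) = ((m : ℝ) + 1) * m.factorial := by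
  rw [Nat.factorial_succ]; push_cast; ring

lemma fact_cast_odd (m : ℕ) : ((2 * m + 3).factorial : ℝ)
    = (2 * (m : ℝ) + 3) * ((2 * (m : ℝ) + 2) * ((2 * m + 1).factorial : ℝ)) := by
  rw [show 2 * m + 3 = (2 * m + 2) + 1 by ring, Nat.factorial_succ,
    show 2 * m + 2 = (2 * m + 1) + 1 by ring, Nat.factorial_succ]
  push_cast; ring

lemma gamma_val (m : ℕ) :
    Real.Gamma ((m : ℝ) + 3 / 2)
      = (2 * m + 1).factorial * Real.sqrt Real.pi / (4 ^ m * m.factorial * 2) := by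
  induction m with
  | zero =>
    rw [show ((0:ℕ):ℝ) + 3 / 2 = 1 / 2 + 1 by norm_num, Real.Gamma_add_one (by norm_num),
      Real.Gamma_one_half_eq]
    norm_num; ring
  | succ m ih =>
    have h : ((m + 1 : ℕ) : ℝ) + 3 / 2 = ((m : ℝ) + 3 / 2) + 1 := by push_cast; ring
    rw [h, Real.Gamma_add_one (by positivity), ih,
      show 2 * (m + 1) + 1 = 2 * m + 3 by ring, fact_cast_odd m, fact_cast_succ m]
    have hf : (0:ℝ) < (m.factorial : ℝ) := by exact_mod_cast m.factorial_pos
    have hf2 : (0:ℝ) < ((2 * m + 1).factorial : ℝ) := by exact_mod_cast (2*m+1).factorial_pos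
    field_simp
    ring

lemma cos_odd_int (m : ℕ) :
    (∫ θ in (0:ℝ)..(Real.pi / 2), Real.cos θ ^ (2 * m + 1))
      = 4 ^ m * (m.factorial : ℝ) ^ 2 / ((2 * m + 1).factorial : ℝ) := by
  induction m with
  | zero => simp [integral_cos]
  | succ m ih =>
    have h : 2 * (m + 1) + 1 = (2 * m + 1) + 2 := by ring
    rw [h, integral_cos_pow, ih, Real.cos_pi_div_two, Real.sin_zero,
      show (2 * m + 1) + 2 = 2 * m + 3 by ring, fact_cast_odd m, fact_cast_succ m]
    have hf1 : (0:ℝ) < ((2 * m + 1).factorial : ℝ) := by exact_mod_cast (2*m+1).factorial_pos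
    have hf : (0:ℝ) < (m.factorial : ℝ) := by exact_mod_cast m.factorial_pos
    push_cast
    field_simp
    ring

lemma term_eq (x : ℝ) (m : ℕ) :
    Real.pi / 2 * ((-1 : ℝ) ^ m * (x / 2) ^ (2 * m + 1) / (Real.Gamma ((m : ℝ) + 3 / 2)) ^ 2)
      = (-1 : ℝ) ^ m * x ^ (2 * m + 1) / ((2 * m + 1).factorial : ℝ)
          * (4 ^ m * (m.factorial : ℝ) ^ 2 / ((2 * m + 1).factorial : ℝ)) := by
  have hs : Real.sqrt Real.pi * Real.sqrt Real.pi = Real.pi :=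
    Real.mul_self_sqrt Real.pi_pos.le
  have hf : (0:ℝ) < (m.factorial : ℝ) := by exact_mod_cast m.factorial_pos
  have hf2 : (0:ℝ) < ((2 * m + 1).factorial : ℝ) := by exact_mod_cast (2*m+1).factorial_pos
  have hsp : (0:ℝ) < Real.sqrt Real.pi := Real.sqrt_pos.2 Real.pi_pos
  have h2 : (2:ℝ) ^ (2 * m + 1) = 2 * 4 ^ m := by
    rw [pow_succ, pow_mul]; norm_num; ring
  rw [gamma_val m, div_pow, div_pow, h2]
  rw [mul_pow ((2 * m + 1).factorial : ℝ) (Real.sqrt Real.pi) 2]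
  rw [show Real.sqrt Real.pi ^ 2 = Real.pi by rw [sq]; exact hs]
  field_simp

lemma struve_int (x : ℝ) :
    (∫ θ in (0:ℝ)..(Real.pi / 2), Real.sin (x * Real.cos θ))
      = Real.pi / 2 * struveH0 x := by
  have hpi : (0:ℝ) ≤ Real.pi / 2 := by positivity
  set F : ℕ → ℝ → ℝ := fun m θ =>
    (-1 : ℝ) ^ m * (x * Real.cos θ) ^ (2 * m + 1) / ((2 * m + 1).factorial : ℝ) with hF
  have hcont : ∀ m, Continuous (F m) := by
    intro m
    apply Continuous.div_const
    fun_prop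
  have hint : ∀ m, IntegrableOn (F m) (Set.Ioc 0 (Real.pi / 2)) := fun m =>
    (hcont m).integrableOn_Ioc
  have hsum : Summable fun m => ∫ θ in Set.Ioc (0:ℝ) (Real.pi / 2), ‖F m θ‖ := by
    have hbnd : ∀ m, (∫ θ in Set.Ioc (0:ℝ) (Real.pi / 2), ‖F m θ‖)
        ≤ Real.pi / 2 * (|x| ^ (2 * m + 1) / ((2 * m + 1).factorial : ℝ)) := by
      intro m
      have hf2 : (0:ℝ) < ((2 * m + 1).factorial : ℝ) := by
        exact_mod_cast (2*m+1).factorial_pos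
      have hb : ∀ θ ∈ Set.Ioc (0:ℝ) (Real.pi / 2),
          ‖F m θ‖ ≤ |x| ^ (2 * m + 1) / ((2 * m + 1).factorial : ℝ) := by
        intro θ _
        rw [hF]
        simp only [norm_div, norm_mul, norm_pow, norm_neg, norm_one, one_pow, one_mul,
          Real.norm_eq_abs]
        rw [abs_of_pos hf2]
        apply div_le_div_of_nonneg_right ?_ hf2.le
        apply pow_le_pow_left₀ (mul_nonneg (abs_nonneg x) (abs_nonneg _))
        calc |x| * |Real.cos θ| ≤ |x| * 1 :=
              mul_le_mul_of_nonneg_left (Real.abs_cos_le_one θ) (abs_nonneg x)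
          _ = |x| := mul_one _
      calc (∫ θ in Set.Ioc (0:ℝ) (Real.pi / 2), ‖F m θ‖)
          ≤ ∫ _θ in Set.Ioc (0:ℝ) (Real.pi / 2),
              |x| ^ (2 * m + 1) / ((2 * m + 1).factorial : ℝ) := by
            apply setIntegral_mono_on ((hcont m).norm.integrableOn_Ioc)
              (integrableOn_const measure_Ioc_lt_top.ne)
              measurableSet_Ioc hb
        _ = Real.pi / 2 * (|x| ^ (2 * m + 1) / ((2 * m + 1).factorial : ℝ)) := by
            rw [setIntegral_const, measureReal_def, Real.volume_Ioc, smul_eq_mul]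
            rw [ENNReal.toReal_ofReal (by linarith)]
            norm_num
    have hg : Summable fun m =>
        Real.pi / 2 * (|x| ^ (2 * m + 1) / ((2 * m + 1).factorial : ℝ)) := by
      apply Summable.mul_left
      exact (Real.summable_pow_div_factorial |x|).comp_injective
        (fun a b hab => by simp only [] at hab; omega : Function.Injective fun m => 2 * m + 1)
    exact Summable.of_nonneg_of_le
      (fun m => integral_nonneg fun θ => norm_nonneg _) hbnd hg
  have hswap := MeasureTheory.integral_tsum_of_summable_integral_norm hint hsum
  have hpt : ∀ θ : ℝ, Real.sin (x * Real.cos θ) = ∑' m, F m θ := fun θ =>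
    Real.sin_eq_tsum (x * Real.cos θ)
  rw [intervalIntegral.integral_of_le hpi]
  calc (∫ θ in Set.Ioc (0:ℝ) (Real.pi/2), Real.sin (x * Real.cos θ))
      = ∫ θ in Set.Ioc (0:ℝ) (Real.pi/2), ∑' m, F m θ := by
        apply setIntegral_congr_fun measurableSet_Ioc (fun θ _ => hpt θ)
    _ = ∑' m, ∫ θ in Set.Ioc (0:ℝ) (Real.pi/2), F m θ := hswap.symm
    _ = Real.pi / 2 * struveH0 x := by
        rw [struveH0, ← tsum_mul_left]
        apply tsum_congr
        intro m
        rw [term_eq x m, ← cos_odd_int m, ← intervalIntegral.integral_of_le hpi]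
        rw [← intervalIntegral.integral_const_mul]
        apply intervalIntegral.integral_congr
        intro θ _
        simp only [hF]
        rw [mul_pow]
        ring

theorem stmt13 (n : ℕ) (x : ℝ) :
    ∑ k ∈ Finset.range (n + 1), (-1 : ℝ) ^ k * s0 k x
      = Real.pi / 4 * struveH0 x + (1 / 2) *
        ∫ t in (0:ℝ)..1,
          Real.sin (x * t) * (Polynomial.Chebyshev.U ℝ (2 * n)).eval t /
            Real.sqrt (1 - t ^ 2) := by
  have hterm : ∀ k : ℕ, (-1 : ℝ) ^ k * s0 k x
      = ∫ θ in (0:ℝ)..(Real.pi / 2),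
          Real.sin (x * Real.cos θ) * (Chebyshev.T ℝ (2 * k)).eval (Real.cos θ) := by
    intro k
    have h := subst_cos (fun u => Real.sin (x * u) * (Chebyshev.T ℝ (2 * k)).eval u)
    rw [s0, ← mul_assoc, ← mul_pow, show ((-1:ℝ) * (-1)) = 1 by norm_num, one_pow, one_mul]
    exact h
  have hcontT : ∀ k : ℕ, Continuous fun θ : ℝ =>
      Real.sin (x * Real.cos θ) * (Chebyshev.T ℝ (2 * k)).eval (Real.cos θ) := by
    intro k
    exact (Real.continuous_sin.comp (continuous_const.mul Real.continuous_cos)).mul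
      ((Chebyshev.T ℝ (2 * k)).continuous.comp Real.continuous_cos)
  calc ∑ k ∈ Finset.range (n + 1), (-1 : ℝ) ^ k * s0 k x
      = ∑ k ∈ Finset.range (n + 1), ∫ θ in (0:ℝ)..(Real.pi / 2),
          Real.sin (x * Real.cos θ) * (Chebyshev.T ℝ (2 * k)).eval (Real.cos θ) :=
        Finset.sum_congr rfl fun k _ => hterm k
    _ = ∫ θ in (0:ℝ)..(Real.pi / 2), ∑ k ∈ Finset.range (n + 1),
          Real.sin (x * Real.cos θ) * (Chebyshev.T ℝ (2 * k)).eval (Real.cos θ) :=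
        (intervalIntegral.integral_finset_sum fun k _ =>
          (hcontT k).intervalIntegrable 0 (Real.pi / 2)).symm
    _ = ∫ θ in (0:ℝ)..(Real.pi / 2),
          ((1:ℝ)/2 * Real.sin (x * Real.cos θ)
            + 1/2 * (Real.sin (x * Real.cos θ)
                * (Chebyshev.U ℝ (2 * n)).eval (Real.cos θ))) := by
        apply intervalIntegral.integral_congr
        intro θ _
        simp only []
        rw [← Finset.mul_sum, cheb_sum n (Real.cos θ)]
        ring
    _ = Real.pi / 4 * struveH0 x + (1 / 2) *
        ∫ t in (0:ℝ)..1,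
          Real.sin (x * t) * (Chebyshev.U ℝ (2 * n)).eval t / Real.sqrt (1 - t ^ 2) := by
        rw [intervalIntegral.integral_add, intervalIntegral.integral_const_mul,
          intervalIntegral.integral_const_mul, struve_int,
          subst_cos (fun t => Real.sin (x * t) * (Chebyshev.U ℝ (2 * n)).eval t)]
        · ring
        · exact (continuous_const.mul (Real.continuous_sin.comp
            (continuous_const.mul Real.continuous_cos))).intervalIntegrable _ _
        · exact (continuous_const.mul
            ((Real.continuous_sin.comp (continuous_const.mul Real.continuous_cos)).mul
            ((Chebyshev.U ℝ (2 * n)).continuous.comp Real.continuous_cos))).intervalIntegrable _ _
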